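/- The function Υ(ρ) = (3 + 2ρ + 2ρ² + ρ³) sinh ρ − ρ(3 + 2ρ + ρ²) cosh ρ has exactly one zero ρ₀ in (0,∞); moreover Υ'(ρ) = (ρ − 2)(ρ(1+ρ) cosh ρ − (1+ρ+ρ²) sinh ρ), Υ'(ρ) > 0 for ρ ∈ (0,2), and Υ'(ρ) ≤ 0 for ρ ≥ 2. -/

import Mathlib

noncomputable section

open Real

/-- `Υ(ρ) = (3 + 2ρ + 2ρ² + ρ³) sinh ρ − ρ(3 + 2ρ + ρ²) cosh ρ`. -/
def Upsilon (ρ : ℝ) : ℝ :=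
  (3 + 2 * ρ + 2 * ρ ^ 2 + ρ ^ 3) * Real.sinh ρ - ρ * (3 + 2 * ρ + ρ ^ 2) * Real.cosh ρ

lemma quad_lt_exp {x : ℝ} (hx : 0 < x) : 1 + x + x ^ 2 / 2 < Real.exp x := by
  have h := Real.sum_le_exp_of_nonneg hx.le 4
  have hsum : ∑ i ∈ Finset.range 4, x ^ i / (Nat.factorial i : ℝ) =
      1 + x + x ^ 2 / 2 + x ^ 3 / 6 := by
    simp [Finset.sum_range_succ, Nat.factorial]
  have hx3 : 0 < x ^ 3 / 6 := by positivity
  linarith [hsum ▸ h]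

lemma g_neg {ρ : ℝ} (hρ : 0 < ρ) :
    ρ * (1 + ρ) * Real.cosh ρ - (1 + ρ + ρ ^ 2) * Real.sinh ρ < 0 := by
  have hkey : 1 + 2 * ρ + (2 * ρ) ^ 2 / 2 < Real.exp (2 * ρ) := quad_lt_exp (by linarith)
  have hE : (0 : ℝ) < Real.exp ρ := Real.exp_pos ρ
  have hE' : (0 : ℝ) < Real.exp (-ρ) := Real.exp_pos (-ρ)
  have hmul : Real.exp ρ * Real.exp (-ρ) = 1 := by
    rw [← Real.exp_add]; simp
  have hsq : Real.exp (2 * ρ) = Real.exp ρ * Real.exp ρ := by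
    rw [two_mul, Real.exp_add]
  rw [Real.cosh_eq, Real.sinh_eq]
  rw [hsq] at hkey
  nlinarith [hE, hE', hmul, hkey, sq_nonneg ρ]

lemma upsilon_hasDerivAt (ρ : ℝ) : HasDerivAt Upsilon
    ((ρ - 2) * (ρ * (1 + ρ) * Real.cosh ρ - (1 + ρ + ρ ^ 2) * Real.sinh ρ)) ρ := by
  have hp1 : HasDerivAt (fun x : ℝ => 3 + 2 * x + 2 * x ^ 2 + x ^ 3)
      (2 + 4 * ρ + 3 * ρ ^ 2) ρ := by
    have h := (((hasDerivAt_pow 3 ρ).add_const 0))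
    have h2 : HasDerivAt (fun x : ℝ => 3 + 2 * x + 2 * x ^ 2 + x ^ 3)
        (0 + 2 * 1 + 2 * (2 * ρ ^ 1) + 3 * ρ ^ 2) ρ := by
      exact (((hasDerivAt_const ρ (3:ℝ)).add ((hasDerivAt_id ρ).const_mul 2)).add
        ((hasDerivAt_pow 2 ρ).const_mul 2)).add (by simpa using hasDerivAt_pow 3 ρ)
    convert h2 using 1; ring
  have hp2 : HasDerivAt (fun x : ℝ => x * (3 + 2 * x + x ^ 2))
      (3 + 4 * ρ + 3 * ρ ^ 2) ρ := by
    have h2 : HasDerivAt (fun x : ℝ => x * (3 + 2 * x + x ^ 2))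
        (1 * (3 + 2 * ρ + ρ ^ 2) + ρ * (0 + 2 * 1 + 2 * ρ ^ 1)) ρ := by
      exact (hasDerivAt_id ρ).mul
        (((hasDerivAt_const ρ (3:ℝ)).add ((hasDerivAt_id ρ).const_mul 2)).add
          (by simpa using hasDerivAt_pow 2 ρ))
    convert h2 using 1; ring
  have h := (hp1.mul (Real.hasDerivAt_sinh ρ)).sub (hp2.mul (Real.hasDerivAt_cosh ρ))
  unfold Upsilon
  exact h.congr_deriv (by ring)

lemma upsilon_cont : Continuous Upsilon := by
  unfold Upsilon; fun_prop

lemma upsilon_strictMonoOn : StrictMonoOn Upsilon (Set.Icc 0 2) := by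
  apply strictMonoOn_of_deriv_pos (convex_Icc 0 2) upsilon_cont.continuousOn
  intro x hx
  rw [interior_Icc] at hx
  rw [(upsilon_hasDerivAt x).deriv]
  exact mul_pos_of_neg_of_neg (by linarith [hx.2]) (g_neg hx.1)

lemma upsilon_strictAntiOn : StrictAntiOn Upsilon (Set.Ici 2) := by
  apply strictAntiOn_of_deriv_neg (convex_Ici 2) upsilon_cont.continuousOn
  intro x hx
  rw [interior_Ici] at hx
  rw [(upsilon_hasDerivAt x).deriv]
  exact mul_neg_of_pos_of_neg (by linarith [Set.mem_Ioi.mp hx])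
    (g_neg (by linarith [Set.mem_Ioi.mp hx]))

lemma upsilon_zero : Upsilon 0 = 0 := by simp [Upsilon]

lemma upsilon_two_pos : 0 < Upsilon 2 := by
  have := upsilon_strictMonoOn (Set.mem_Icc.mpr ⟨le_refl 0, by norm_num⟩)
    (Set.mem_Icc.mpr ⟨by norm_num, le_refl 2⟩) (by norm_num)
  rwa [upsilon_zero] at this

lemma upsilon_four_neg : Upsilon 4 < 0 := by
  have hE : (0 : ℝ) < Real.exp 4 := Real.exp_pos 4
  have hE' : (0 : ℝ) < Real.exp (-4) := Real.exp_pos (-4)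
  unfold Upsilon
  rw [Real.cosh_eq, Real.sinh_eq]
  norm_num
  nlinarith [hE, hE']

/-- `Υ` has exactly one zero in `(0,∞)`; its derivative is
`Υ'(ρ) = (ρ − 2)(ρ(1+ρ) cosh ρ − (1+ρ+ρ²) sinh ρ)`, which is positive on `(0,2)` and
nonpositive on `[2,∞)`. -/
theorem upsilon_unique_positive_zero :
    (∃! ρ : ℝ, ρ ∈ Set.Ioi (0 : ℝ) ∧ Upsilon ρ = 0) ∧
    (∀ ρ : ℝ, HasDerivAt Upsilon
      ((ρ - 2) * (ρ * (1 + ρ) * Real.cosh ρ - (1 + ρ + ρ ^ 2) * Real.sinh ρ)) ρ) ∧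
    (∀ ρ ∈ Set.Ioo (0 : ℝ) 2,
      0 < (ρ - 2) * (ρ * (1 + ρ) * Real.cosh ρ - (1 + ρ + ρ ^ 2) * Real.sinh ρ)) ∧
    (∀ ρ : ℝ, 2 ≤ ρ →
      (ρ - 2) * (ρ * (1 + ρ) * Real.cosh ρ - (1 + ρ + ρ ^ 2) * Real.sinh ρ) ≤ 0) := by
  have hpos : ∀ ρ ∈ Set.Ioc (0:ℝ) 2, 0 < Upsilon ρ := by
    intro ρ hρ
    have := upsilon_strictMonoOn (Set.mem_Icc.mpr ⟨le_refl 0, by norm_num⟩)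
      (Set.mem_Icc.mpr ⟨hρ.1.le, hρ.2⟩) hρ.1
    rwa [upsilon_zero] at this
  refine ⟨?_, upsilon_hasDerivAt, ?_, ?_⟩
  · -- unique zero
    obtain ⟨ρ₀, hρ₀mem, hρ₀⟩ := intermediate_value_Icc' (by norm_num : (2:ℝ) ≤ 4)
      upsilon_cont.continuousOn
      (Set.mem_Icc.mpr ⟨upsilon_four_neg.le, upsilon_two_pos.le⟩)
    have hρ₀ne : ρ₀ ≠ 2 := by
      intro h; rw [h] at hρ₀; linarith [upsilon_two_pos]
    have hρ₀gt : 2 < ρ₀ := lt_of_le_of_ne hρ₀mem.1 (Ne.symm hρ₀ne)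
    refine ⟨ρ₀, ⟨by simp [Set.mem_Ioi]; linarith, hρ₀⟩, ?_⟩
    rintro ρ ⟨hρmem, hρzero⟩
    have hρpos : 0 < ρ := hρmem
    by_cases h2 : ρ ≤ 2
    · exact absurd hρzero (ne_of_gt (hpos ρ ⟨hρpos, h2⟩))
    · push_neg at h2
      exact upsilon_strictAntiOn.injOn (Set.mem_Ici.mpr h2.le)
        (Set.mem_Ici.mpr hρ₀gt.le) (by rw [hρzero, hρ₀])
  · intro ρ hρ
    exact mul_pos_of_neg_of_neg (by linarith [hρ.2]) (g_neg hρ.1)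
  · intro ρ hρ
    exact mul_nonpos_of_nonneg_of_nonpos (by linarith) (g_neg (by linarith)).le
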